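/- Let U ⊆ ℂ be open and φ : U → ℝ smooth. With K := −2 e^{−2φ} ∂_z∂_{z̄}φ, K_{;z̄z̄} := ∂_{z̄}²K − 2(∂_{z̄}φ)(∂_{z̄}K), K_{;z̄z̄z} := ∂_z K_{;z̄z̄}, and K_{;z̄z̄zz} := ∂_z K_{;z̄z̄z} − 2(∂_zφ) K_{;z̄z̄z}, the function K_{;z̄z̄zz} is real-valued on U, i.e. its imaginary part vanishes identically. -/

import Mathlib

open Complex
open scoped ContDiff

/-- Partial derivative in the `x`-direction (real coordinate). -/
noncomputable def pdx (f : ℂ → ℂ) (z : ℂ) : ℂ := fderiv ℝ f z 1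

/-- Partial derivative in the `y`-direction (real coordinate). -/
noncomputable def pdy (f : ℂ → ℂ) (z : ℂ) : ℂ := fderiv ℝ f z Complex.I

/-- Wirtinger derivative `∂_z = (1/2)(∂_x - i ∂_y)`. -/
noncomputable def pdz (f : ℂ → ℂ) (z : ℂ) : ℂ := (1/2) * (pdx f z - Complex.I * pdy f z)

/-- Wirtinger derivative `∂_z̄ = (1/2)(∂_x + i ∂_y)`. -/
noncomputable def pdzbar (f : ℂ → ℂ) (z : ℂ) : ℂ := (1/2) * (pdx f z + Complex.I * pdy f z)

/-- The complexification of a real-valued function. -/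
noncomputable def phiC (φ : ℂ → ℝ) : ℂ → ℂ := fun z => (φ z : ℂ)

/-- The Gauss curvature `K = -2 e^{-2φ} ∂_z ∂_z̄ φ` of the metric `g = 2 e^{2φ} |dz|²`. -/
noncomputable def gaussK (φ : ℂ → ℝ) : ℂ → ℂ := fun z =>
  (-2 : ℂ) * (Real.exp (-2 * φ z) : ℂ) * pdz (pdzbar (phiC φ)) z

/-- The Laplace–Beltrami operator `Δ_g f = 2 e^{-2φ} ∂_z ∂_z̄ f` of `g = 2 e^{2φ} |dz|²`. -/
noncomputable def lapg (φ : ℂ → ℝ) (f : ℂ → ℂ) : ℂ → ℂ := fun z =>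
  (2 : ℂ) * (Real.exp (-2 * φ z) : ℂ) * pdz (pdzbar f) z

/-- Second covariant derivative `K_{;z̄z̄} = ∂_z̄² K - 2 (∂_z̄ φ)(∂_z̄ K)`. -/
noncomputable def Kzb2 (φ : ℂ → ℝ) : ℂ → ℂ := fun z =>
  pdzbar (pdzbar (gaussK φ)) z - 2 * pdzbar (phiC φ) z * pdzbar (gaussK φ) z

/-- Third covariant derivative `K_{;z̄z̄z} = ∂_z K_{;z̄z̄}`. -/
noncomputable def Kzb2z (φ : ℂ → ℝ) : ℂ → ℂ := fun z => pdz (Kzb2 φ) z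

/-- Fourth covariant derivative `K_{;z̄z̄zz} = ∂_z K_{;z̄z̄z} - 2 (∂_z φ) K_{;z̄z̄z}`. -/
noncomputable def Kzb2z2 (φ : ℂ → ℝ) : ℂ → ℂ := fun z =>
  pdz (Kzb2z φ) z - 2 * pdz (phiC φ) z * Kzb2z φ z

/-- The Euclidean Laplacian `Δ = ∂_x² + ∂_y²` on real-valued functions on `ℂ ≅ ℝ²`. -/
noncomputable def lapR (f : ℂ → ℝ) : ℂ → ℝ := fun z =>
  fderiv ℝ (fun w => fderiv ℝ f w 1) z 1 + fderiv ℝ (fun w => fderiv ℝ f w Complex.I) z Complex.I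

namespace WirtAux

variable {U : Set ℂ} {f g : ℂ → ℂ} {z : ℂ} {c : ℂ}

lemma diffAt (hU : IsOpen U) (hf : ContDiffOn ℝ ∞ f U) (hz : z ∈ U) : DifferentiableAt ℝ f z :=
  (hf.differentiableOn (by simp)).differentiableAt (hU.mem_nhds hz)

lemma contDiffOn_pdx (hU : IsOpen U) (hf : ContDiffOn ℝ ∞ f U) : ContDiffOn ℝ ∞ (pdx f) U :=
  (hf.fderiv_of_isOpen hU (by simp)).clm_apply contDiffOn_const

lemma contDiffOn_pdy (hU : IsOpen U) (hf : ContDiffOn ℝ ∞ f U) : ContDiffOn ℝ ∞ (pdy f) U :=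
  (hf.fderiv_of_isOpen hU (by simp)).clm_apply contDiffOn_const

lemma contDiffOn_pdz (hU : IsOpen U) (hf : ContDiffOn ℝ ∞ f U) : ContDiffOn ℝ ∞ (pdz f) U := by
  unfold pdz
  exact contDiffOn_const.mul ((contDiffOn_pdx hU hf).sub
    (contDiffOn_const.mul (contDiffOn_pdy hU hf)))

lemma contDiffOn_pdzbar (hU : IsOpen U) (hf : ContDiffOn ℝ ∞ f U) :
    ContDiffOn ℝ ∞ (pdzbar f) U := by
  unfold pdzbar
  exact contDiffOn_const.mul ((contDiffOn_pdx hU hf).add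
    (contDiffOn_const.mul (contDiffOn_pdy hU hf)))

lemma pdx_congr_on (hU : IsOpen U) (h : ∀ w ∈ U, f w = g w) :
    ∀ w ∈ U, pdx f w = pdx g w := by
  intro w hw
  have he : f =ᶠ[nhds w] g := Filter.eventuallyEq_of_mem (hU.mem_nhds hw) h
  simp [pdx, he.fderiv_eq]

lemma pdy_congr_on (hU : IsOpen U) (h : ∀ w ∈ U, f w = g w) :
    ∀ w ∈ U, pdy f w = pdy g w := by
  intro w hw
  have he : f =ᶠ[nhds w] g := Filter.eventuallyEq_of_mem (hU.mem_nhds hw) h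
  simp [pdy, he.fderiv_eq]

lemma pdz_congr_on (hU : IsOpen U) (h : ∀ w ∈ U, f w = g w) :
    ∀ w ∈ U, pdz f w = pdz g w := by
  intro w hw
  simp [pdz, pdx_congr_on hU h w hw, pdy_congr_on hU h w hw]

lemma pdzbar_congr_on (hU : IsOpen U) (h : ∀ w ∈ U, f w = g w) :
    ∀ w ∈ U, pdzbar f w = pdzbar g w := by
  intro w hw
  simp [pdzbar, pdx_congr_on hU h w hw, pdy_congr_on hU h w hw]

lemma pdx_mul (hf : DifferentiableAt ℝ f z) (hg : DifferentiableAt ℝ g z) :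
    pdx (fun w => f w * g w) z = pdx f z * g z + f z * pdx g z := by
  simp only [pdx, fderiv_fun_mul hf hg, ContinuousLinearMap.add_apply,
    ContinuousLinearMap.smul_apply, smul_eq_mul]
  ring

lemma pdy_mul (hf : DifferentiableAt ℝ f z) (hg : DifferentiableAt ℝ g z) :
    pdy (fun w => f w * g w) z = pdy f z * g z + f z * pdy g z := by
  simp only [pdy, fderiv_fun_mul hf hg, ContinuousLinearMap.add_apply,
    ContinuousLinearMap.smul_apply, smul_eq_mul]
  ring

lemma pdz_mul (hf : DifferentiableAt ℝ f z) (hg : DifferentiableAt ℝ g z) :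
    pdz (fun w => f w * g w) z = pdz f z * g z + f z * pdz g z := by
  simp only [pdz, pdx_mul hf hg, pdy_mul hf hg]; ring

lemma pdzbar_mul (hf : DifferentiableAt ℝ f z) (hg : DifferentiableAt ℝ g z) :
    pdzbar (fun w => f w * g w) z = pdzbar f z * g z + f z * pdzbar g z := by
  simp only [pdzbar, pdx_mul hf hg, pdy_mul hf hg]; ring

lemma pdx_sub (hf : DifferentiableAt ℝ f z) (hg : DifferentiableAt ℝ g z) :
    pdx (fun w => f w - g w) z = pdx f z - pdx g z := by
  simp [pdx, fderiv_fun_sub hf hg]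

lemma pdy_sub (hf : DifferentiableAt ℝ f z) (hg : DifferentiableAt ℝ g z) :
    pdy (fun w => f w - g w) z = pdy f z - pdy g z := by
  simp [pdy, fderiv_fun_sub hf hg]

lemma pdz_sub (hf : DifferentiableAt ℝ f z) (hg : DifferentiableAt ℝ g z) :
    pdz (fun w => f w - g w) z = pdz f z - pdz g z := by
  simp only [pdz, pdx_sub hf hg, pdy_sub hf hg]; ring

lemma pdzbar_sub (hf : DifferentiableAt ℝ f z) (hg : DifferentiableAt ℝ g z) :
    pdzbar (fun w => f w - g w) z = pdzbar f z - pdzbar g z := by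
  simp only [pdzbar, pdx_sub hf hg, pdy_sub hf hg]; ring

lemma pdx_const_mul (hf : DifferentiableAt ℝ f z) (c : ℂ) :
    pdx (fun w => c * f w) z = c * pdx f z := by
  simp [pdx, fderiv_const_mul hf c]

lemma pdy_const_mul (hf : DifferentiableAt ℝ f z) (c : ℂ) :
    pdy (fun w => c * f w) z = c * pdy f z := by
  simp [pdy, fderiv_const_mul hf c]

lemma pdz_const_mul (hf : DifferentiableAt ℝ f z) (c : ℂ) :
    pdz (fun w => c * f w) z = c * pdz f z := by
  simp only [pdz, pdx_const_mul hf, pdy_const_mul hf]; ring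

lemma pdzbar_const_mul (hf : DifferentiableAt ℝ f z) (c : ℂ) :
    pdzbar (fun w => c * f w) z = c * pdzbar f z := by
  simp only [pdzbar, pdx_const_mul hf, pdy_const_mul hf]; ring

lemma pdz_cmul_mul (hf : DifferentiableAt ℝ f z) (hg : DifferentiableAt ℝ g z) (c : ℂ) :
    pdz (fun w => c * f w * g w) z = c * pdz f z * g z + c * f z * pdz g z := by
  have h := pdz_mul (hf.const_mul c) hg
  rw [show (fun w => c * f w * g w) = (fun w => (c * f w) * g w) from rfl, h,
    pdz_const_mul hf c]

lemma pdzbar_cmul_mul (hf : DifferentiableAt ℝ f z) (hg : DifferentiableAt ℝ g z) (c : ℂ) :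
    pdzbar (fun w => c * f w * g w) z = c * pdzbar f z * g z + c * f z * pdzbar g z := by
  have h := pdzbar_mul (hf.const_mul c) hg
  rw [show (fun w => c * f w * g w) = (fun w => (c * f w) * g w) from rfl, h,
    pdzbar_const_mul hf c]

lemma pdx_conj (hf : DifferentiableAt ℝ f z) :
    pdx (fun w => (starRingEnd ℂ) (f w)) z = (starRingEnd ℂ) (pdx f z) := by
  have h : fderiv ℝ (fun w => (starRingEnd ℂ) (f w)) z
      = (Complex.conjCLE.toContinuousLinearMap).comp (fderiv ℝ f z) :=
    (Complex.conjCLE.toContinuousLinearMap.hasFDerivAt.comp z hf.hasFDerivAt).fderiv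
  simp [pdx, h]

lemma pdy_conj (hf : DifferentiableAt ℝ f z) :
    pdy (fun w => (starRingEnd ℂ) (f w)) z = (starRingEnd ℂ) (pdy f z) := by
  have h : fderiv ℝ (fun w => (starRingEnd ℂ) (f w)) z
      = (Complex.conjCLE.toContinuousLinearMap).comp (fderiv ℝ f z) :=
    (Complex.conjCLE.toContinuousLinearMap.hasFDerivAt.comp z hf.hasFDerivAt).fderiv
  simp [pdy, h]

lemma pdz_conj (hf : DifferentiableAt ℝ f z) :
    pdz (fun w => (starRingEnd ℂ) (f w)) z = (starRingEnd ℂ) (pdzbar f z) := by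
  simp only [pdz, pdzbar, pdx_conj hf, pdy_conj hf, map_mul, map_add, map_sub,
    Complex.conj_I, map_one, map_ofNat, map_div₀]
  ring

lemma pdzbar_conj (hf : DifferentiableAt ℝ f z) :
    pdzbar (fun w => (starRingEnd ℂ) (f w)) z = (starRingEnd ℂ) (pdz f z) := by
  simp only [pdz, pdzbar, pdx_conj hf, pdy_conj hf, map_mul, map_add, map_sub,
    Complex.conj_I, map_one, map_ofNat, map_div₀]
  ring

lemma pdx_exp (hf : DifferentiableAt ℝ f z) :
    pdx (fun w => Complex.exp (f w)) z = Complex.exp (f z) * pdx f z := by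
  have h := (hf.hasFDerivAt.cexp).fderiv
  simp [pdx, h]

lemma pdy_exp (hf : DifferentiableAt ℝ f z) :
    pdy (fun w => Complex.exp (f w)) z = Complex.exp (f z) * pdy f z := by
  have h := (hf.hasFDerivAt.cexp).fderiv
  simp [pdy, h]

lemma pdz_exp (hf : DifferentiableAt ℝ f z) :
    pdz (fun w => Complex.exp (f w)) z = Complex.exp (f z) * pdz f z := by
  simp only [pdz, pdx_exp hf, pdy_exp hf]; ring

lemma pdzbar_exp (hf : DifferentiableAt ℝ f z) :
    pdzbar (fun w => Complex.exp (f w)) z = Complex.exp (f z) * pdzbar f z := by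
  simp only [pdzbar, pdx_exp hf, pdy_exp hf]; ring

lemma pdz_pdzbar_comm (hU : IsOpen U) (hf : ContDiffOn ℝ ∞ f U) (hz : z ∈ U) :
    pdz (pdzbar f) z = pdzbar (pdz f) z := by
  have hF : ContDiffOn ℝ ∞ (fderiv ℝ f) U := hf.fderiv_of_isOpen hU (by simp)
  have hFd : DifferentiableAt ℝ (fderiv ℝ f) z :=
    (hF.differentiableOn (by simp)).differentiableAt (hU.mem_nhds hz)
  have hS := hFd.hasFDerivAt
  have h1 := hS.clm_apply (hasFDerivAt_const (1 : ℂ) z)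
  have hI := hS.clm_apply (hasFDerivAt_const (Complex.I) z)
  have hzb := (h1.add (hI.const_mul Complex.I)).const_mul ((1:ℂ)/2)
  have hzp := (h1.sub (hI.const_mul Complex.I)).const_mul ((1:ℂ)/2)
  have hzb' : HasFDerivAt (pdzbar f) _ z := hzb
  have hzp' : HasFDerivAt (pdz f) _ z := hzp
  have hsym := (hf.contDiffAt (hU.mem_nhds hz)).isSymmSndFDerivAt
    (by rw [minSmoothness_of_isRCLikeNormedField]; exact WithTop.coe_le_coe.2 le_top)
  have e1 := hsym 1 Complex.I
  simp only [pdz, pdzbar, pdx, pdy, hzb'.fderiv, hzp'.fderiv,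
    ContinuousLinearMap.smul_apply, ContinuousLinearMap.add_apply,
    ContinuousLinearMap.sub_apply, ContinuousLinearMap.flip_apply,
    ContinuousLinearMap.comp_apply, ContinuousLinearMap.zero_apply,
    map_zero, smul_eq_mul, add_zero]
  rw [e1]
  ring

end WirtAux

namespace WirtMain

/-- `∂_z φ` -/
noncomputable def wP (φ : ℂ → ℝ) : ℂ → ℂ := pdz (phiC φ)
/-- `∂_z̄ φ` -/
noncomputable def wQ (φ : ℂ → ℝ) : ℂ → ℂ := pdzbar (phiC φ)
/-- `∂_z ∂_z̄ φ` -/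
noncomputable def wU (φ : ℂ → ℝ) : ℂ → ℂ := pdz (wQ φ)
/-- `∂_z ∂_z ∂_z̄ φ` -/
noncomputable def wA (φ : ℂ → ℝ) : ℂ → ℂ := pdz (wU φ)
/-- `∂_z̄ ∂_z ∂_z̄ φ` -/
noncomputable def wB (φ : ℂ → ℝ) : ℂ → ℂ := pdzbar (wU φ)
/-- `e^{-2φ}` -/
noncomputable def wE (φ : ℂ → ℝ) : ℂ → ℂ := fun z => ((Real.exp (-2 * φ z) : ℝ) : ℂ)
noncomputable def k1 (φ : ℂ → ℝ) : ℂ → ℂ := pdz (gaussK φ)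
noncomputable def k1b (φ : ℂ → ℝ) : ℂ → ℂ := pdzbar (gaussK φ)
noncomputable def k2 (φ : ℂ → ℝ) : ℂ → ℂ := pdz (k1 φ)
noncomputable def k11 (φ : ℂ → ℝ) : ℂ → ℂ := pdz (k1b φ)
noncomputable def k2b (φ : ℂ → ℝ) : ℂ → ℂ := pdzbar (k1b φ)
noncomputable def k12 (φ : ℂ → ℝ) : ℂ → ℂ := pdz (k2b φ)
noncomputable def k21 (φ : ℂ → ℝ) : ℂ → ℂ := pdz (k11 φ)
noncomputable def k22 (φ : ℂ → ℝ) : ℂ → ℂ := pdz (k12 φ)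

lemma wE_eq (φ : ℂ → ℝ) : wE φ = fun z => Complex.exp (-2 * phiC φ z) := by
  funext z
  simp only [wE, phiC, Complex.ofReal_exp]
  norm_cast

lemma gaussK_eq (φ : ℂ → ℝ) : gaussK φ = fun z => -2 * wE φ z * wU φ z := by
  funext z
  simp only [gaussK, wE, wU, wQ]

end WirtMain

namespace WirtMain
open WirtAux

theorem Kzbzbzz_real' (U : Set ℂ) (hU : IsOpen U) (φ : ℂ → ℝ)
    (hφ : ContDiffOn ℝ ∞ φ U) :
    ∀ z ∈ U, (Kzb2z2 φ z).im = 0 := by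
  intro z hz
  -- smoothness of the basic blocks
  have hψ : ContDiffOn ℝ ∞ (phiC φ) U :=
    (Complex.ofRealCLM.contDiff (n := (∞ : WithTop ℕ∞))).comp_contDiffOn hφ
  have sP : ContDiffOn ℝ ∞ (wP φ) U := contDiffOn_pdz hU hψ
  have sQ : ContDiffOn ℝ ∞ (wQ φ) U := contDiffOn_pdzbar hU hψ
  have sU : ContDiffOn ℝ ∞ (wU φ) U := contDiffOn_pdz hU sQ
  have sE : ContDiffOn ℝ ∞ (wE φ) U := by
    rw [wE_eq]
    exact Complex.contDiff_exp.comp_contDiffOn (contDiffOn_const.mul hψ)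
  have sK : ContDiffOn ℝ ∞ (gaussK φ) U := by
    rw [gaussK_eq]
    exact (contDiffOn_const.mul sE).mul sU
  have sK1 : ContDiffOn ℝ ∞ (k1 φ) U := contDiffOn_pdz hU sK
  have sK1b : ContDiffOn ℝ ∞ (k1b φ) U := contDiffOn_pdzbar hU sK
  have sK11 : ContDiffOn ℝ ∞ (k11 φ) U := contDiffOn_pdz hU sK1b
  have sK2b : ContDiffOn ℝ ∞ (k2b φ) U := contDiffOn_pdzbar hU sK1b
  have sK12 : ContDiffOn ℝ ∞ (k12 φ) U := contDiffOn_pdz hU sK2b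
  -- conjugation facts
  have c0 : (fun x => (starRingEnd ℂ) (phiC φ x)) = phiC φ := by
    funext x; simp [phiC]
  have cE : ∀ w, (starRingEnd ℂ) (wE φ w) = wE φ w := by
    intro w
    exact Complex.conj_ofReal _
  have cP : ∀ w ∈ U, (starRingEnd ℂ) (wQ φ w) = wP φ w := by
    intro w hw
    show (starRingEnd ℂ) (pdzbar (phiC φ) w) = pdz (phiC φ) w
    rw [← pdz_conj (diffAt hU hψ hw), c0]
  have cQ : ∀ w ∈ U, (starRingEnd ℂ) (wP φ w) = wQ φ w := by
    intro w hw
    show (starRingEnd ℂ) (pdz (phiC φ) w) = pdzbar (phiC φ) w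
    rw [← pdzbar_conj (diffAt hU hψ hw), c0]
  have cU : ∀ w ∈ U, (starRingEnd ℂ) (wU φ w) = wU φ w := by
    intro w hw
    have h1 : (starRingEnd ℂ) (wU φ w) = pdzbar (fun x => (starRingEnd ℂ) (wQ φ x)) w :=
      (pdzbar_conj (diffAt hU sQ hw)).symm
    rw [h1, pdzbar_congr_on hU cP w hw]
    exact (pdz_pdzbar_comm hU hψ hw).symm
  have cK : ∀ w ∈ U, (starRingEnd ℂ) (gaussK φ w) = gaussK φ w := by
    intro w hw
    rw [gaussK_eq]
    simp only [map_mul, map_neg, map_ofNat]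
    rw [cE w, cU w hw]
  have cAB : ∀ w ∈ U, (starRingEnd ℂ) (wA φ w) = wB φ w := by
    intro w hw
    have h1 : (starRingEnd ℂ) (wA φ w) = pdzbar (fun x => (starRingEnd ℂ) (wU φ x)) w :=
      (pdzbar_conj (diffAt hU sU hw)).symm
    rw [h1]
    exact pdzbar_congr_on hU cU w hw
  have cK1 : ∀ w ∈ U, (starRingEnd ℂ) (k1 φ w) = k1b φ w := by
    intro w hw
    have h1 : (starRingEnd ℂ) (k1 φ w) = pdzbar (fun x => (starRingEnd ℂ) (gaussK φ x)) w :=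
      (pdzbar_conj (diffAt hU sK hw)).symm
    rw [h1]
    exact pdzbar_congr_on hU cK w hw
  have cK1b : ∀ w ∈ U, (starRingEnd ℂ) (k1b φ w) = k1 φ w := by
    intro w hw
    have h1 : (starRingEnd ℂ) (k1b φ w) = pdz (fun x => (starRingEnd ℂ) (gaussK φ x)) w :=
      (pdz_conj (diffAt hU sK hw)).symm
    rw [h1]
    exact pdz_congr_on hU cK w hw
  have hK11b : ∀ w ∈ U, pdzbar (k1 φ) w = k11 φ w := by
    intro w hw
    exact (pdz_pdzbar_comm hU sK hw).symm
  have cK11 : ∀ w ∈ U, (starRingEnd ℂ) (k11 φ w) = k11 φ w := by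
    intro w hw
    have h1 : (starRingEnd ℂ) (k11 φ w) = pdzbar (fun x => (starRingEnd ℂ) (k1b φ x)) w :=
      (pdzbar_conj (diffAt hU sK1b hw)).symm
    rw [h1, pdzbar_congr_on hU cK1b w hw]
    exact hK11b w hw
  have cK2b : ∀ w ∈ U, (starRingEnd ℂ) (k2b φ w) = k2 φ w := by
    intro w hw
    have h1 : (starRingEnd ℂ) (k2b φ w) = pdz (fun x => (starRingEnd ℂ) (k1b φ x)) w :=
      (pdz_conj (diffAt hU sK1b hw)).symm
    rw [h1]
    exact pdz_congr_on hU cK1b w hw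
  have hK21b : ∀ w ∈ U, pdzbar (k2 φ) w = k21 φ w := by
    intro w hw
    calc pdzbar (k2 φ) w = pdz (pdzbar (k1 φ)) w := (pdz_pdzbar_comm hU sK1 hw).symm
    _ = pdz (k11 φ) w := pdz_congr_on hU hK11b w hw
  have cK12 : ∀ w ∈ U, (starRingEnd ℂ) (k12 φ w) = k21 φ w := by
    intro w hw
    have h1 : (starRingEnd ℂ) (k12 φ w) = pdzbar (fun x => (starRingEnd ℂ) (k2b φ x)) w :=
      (pdzbar_conj (diffAt hU sK2b hw)).symm
    rw [h1, pdzbar_congr_on hU cK2b w hw]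
    exact hK21b w hw
  have cK21 : ∀ w ∈ U, (starRingEnd ℂ) (k21 φ w) = k12 φ w := by
    intro w hw
    rw [← cK12 w hw, Complex.conj_conj]
  have hK12b : ∀ w ∈ U, pdzbar (k11 φ) w = k12 φ w := by
    intro w hw
    exact (pdz_pdzbar_comm hU sK1b hw).symm
  have hK22b : ∀ w ∈ U, pdzbar (k21 φ) w = k22 φ w := by
    intro w hw
    calc pdzbar (k21 φ) w = pdz (pdzbar (k11 φ)) w := (pdz_pdzbar_comm hU sK11 hw).symm
    _ = pdz (k12 φ) w := pdz_congr_on hU hK12b w hw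
  have cK22 : ∀ w ∈ U, (starRingEnd ℂ) (k22 φ w) = k22 φ w := by
    intro w hw
    have h1 : (starRingEnd ℂ) (k22 φ w) = pdzbar (fun x => (starRingEnd ℂ) (k12 φ x)) w :=
      (pdzbar_conj (diffAt hU sK12 hw)).symm
    rw [h1, pdzbar_congr_on hU cK12 w hw]
    exact hK22b w hw
  -- derivative expansions of E and K
  have hEz : ∀ w ∈ U, pdz (wE φ) w = -2 * wP φ w * wE φ w := by
    intro w hw
    rw [wE_eq]
    rw [pdz_exp ((diffAt hU hψ hw).const_mul (-2)),
      pdz_const_mul (diffAt hU hψ hw) (-2)]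
    rw [show pdz (phiC φ) w = wP φ w from rfl]
    ring
  have hEzb : ∀ w ∈ U, pdzbar (wE φ) w = -2 * wQ φ w * wE φ w := by
    intro w hw
    rw [wE_eq]
    rw [pdzbar_exp ((diffAt hU hψ hw).const_mul (-2)),
      pdzbar_const_mul (diffAt hU hψ hw) (-2)]
    rw [show pdzbar (phiC φ) w = wQ φ w from rfl]
    ring
  have hk1e : ∀ w ∈ U, k1 φ w = 4 * wP φ w * wE φ w * wU φ w - 2 * wE φ w * wA φ w := by
    intro w hw
    show pdz (gaussK φ) w = _
    rw [gaussK_eq]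
    rw [pdz_cmul_mul (diffAt hU sE hw) (diffAt hU sU hw) (-2)]
    rw [hEz w hw, show pdz (wU φ) w = wA φ w from rfl]
    ring
  have hk1be : ∀ w ∈ U, k1b φ w = 4 * wQ φ w * wE φ w * wU φ w - 2 * wE φ w * wB φ w := by
    intro w hw
    show pdzbar (gaussK φ) w = _
    rw [gaussK_eq]
    rw [pdzbar_cmul_mul (diffAt hU sE hw) (diffAt hU sU hw) (-2)]
    rw [hEzb w hw, show pdzbar (wU φ) w = wB φ w from rfl]
    ring
  -- structural expansion of the covariant derivatives
  have hKzb2 : Kzb2 φ = fun w => k2b φ w - 2 * wQ φ w * k1b φ w := rfl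
  have hB : ∀ w ∈ U, Kzb2z φ w
      = k12 φ w - 2 * wU φ w * k1b φ w - 2 * wQ φ w * k11 φ w := by
    intro w hw
    show pdz (Kzb2 φ) w = _
    rw [hKzb2]
    rw [pdz_sub (g := fun w => 2 * wQ φ w * k1b φ w) (diffAt hU sK2b hw) (((diffAt hU sQ hw).const_mul 2).mul (diffAt hU sK1b hw))]
    rw [pdz_cmul_mul (diffAt hU sQ hw) (diffAt hU sK1b hw) 2]
    rw [show pdz (k2b φ) w = k12 φ w from rfl, show pdz (wQ φ) w = wU φ w from rfl,
      show pdz (k1b φ) w = k11 φ w from rfl]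
    ring
  have hT : Kzb2z2 φ z = k22 φ z - 2 * wA φ z * k1b φ z - 4 * wU φ z * k11 φ z
      - 2 * wQ φ z * k21 φ z - 2 * wP φ z * k12 φ z
      + 4 * wP φ z * wU φ z * k1b φ z + 4 * wP φ z * wQ φ z * k11 φ z := by
    show pdz (Kzb2z φ) z - 2 * pdz (phiC φ) z * Kzb2z φ z = _
    rw [pdz_congr_on hU hB z hz]
    rw [pdz_sub (f := fun w => k12 φ w - 2 * wU φ w * k1b φ w)
        (g := fun w => 2 * wQ φ w * k11 φ w) ((diffAt hU sK12 hz).sub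
        (((diffAt hU sU hz).const_mul 2).mul (diffAt hU sK1b hz)))
      (((diffAt hU sQ hz).const_mul 2).mul (diffAt hU sK11 hz))]
    rw [pdz_sub (g := fun w => 2 * wU φ w * k1b φ w) (diffAt hU sK12 hz) (((diffAt hU sU hz).const_mul 2).mul (diffAt hU sK1b hz))]
    rw [pdz_cmul_mul (diffAt hU sU hz) (diffAt hU sK1b hz) 2]
    rw [pdz_cmul_mul (diffAt hU sQ hz) (diffAt hU sK11 hz) 2]
    rw [hB z hz]
    rw [show pdz (k12 φ) z = k22 φ z from rfl, show pdz (wU φ) z = wA φ z from rfl,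
      show pdz (k1b φ) z = k11 φ z from rfl, show pdz (wQ φ) z = wU φ z from rfl,
      show pdz (k11 φ) z = k21 φ z from rfl, show pdz (phiC φ) z = wP φ z from rfl]
    ring
  have hconjT : (starRingEnd ℂ) (Kzb2z2 φ z)
      = k22 φ z - 2 * wB φ z * k1 φ z - 4 * wU φ z * k11 φ z
      - 2 * wP φ z * k12 φ z - 2 * wQ φ z * k21 φ z
      + 4 * wQ φ z * wU φ z * k1 φ z + 4 * wQ φ z * wP φ z * k11 φ z := by
    rw [hT]
    simp only [map_add, map_sub, map_mul, map_ofNat]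
    rw [cK22 z hz, cAB z hz, cK1b z hz, cU z hz, cK11 z hz, cP z hz, cK21 z hz,
      cQ z hz, cK12 z hz]
  have hfin : (starRingEnd ℂ) (Kzb2z2 φ z) = Kzb2z2 φ z := by
    rw [hconjT, hT]
    linear_combination (2 * wA φ z - 4 * wP φ z * wU φ z) * (hk1be z hz)
      + (4 * wQ φ z * wU φ z - 2 * wB φ z) * (hk1e z hz)
  exact Complex.conj_eq_iff_im.mp hfin

end WirtMain

/-- Lemma 4.3 of the paper, final assertion: `K_{;z̄z̄zz}` is real-valued. -/
theorem Kzbzbzz_real (U : Set ℂ) (hU : IsOpen U) (φ : ℂ → ℝ)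
    (hφ : ContDiffOn ℝ ∞ φ U) :
    ∀ z ∈ U, (Kzb2z2 φ z).im = 0 := by
  exact WirtMain.Kzbzbzz_real' U hU φ hφ
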